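/- Let E be the field F₉ viewed as an F₃-vector space and K ⊆ End_{F₃}(E) a subring that is a field of order 9 containing the identity. Then the evaluation map f : K → E, α ↦ (1_E)·α, is a bijection; in fact it is an isomorphism of additive groups. -/

import Mathlib

instance : Fact (Nat.Prime 3) := ⟨by norm_num⟩

/-- Let `E = F₉` viewed as an `F₃`-vector space and
`K ⊆ End_{F₃}(E)` a subring that is a field of order 9 (containing the identity, as every
subring does).  Then the evaluation map `f : K → E`, `α ↦ (1_E)·α`, is a bijection; in fact
it is an isomorphism of additive groups. -/
theorem stmt_13 (K : Subring (Module.End (ZMod 3) (GaloisField 3 2)))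
    (hK : IsField K) (hcard : Nat.card K = 9) :
    Function.Bijective
      (fun α : K => (α : Module.End (ZMod 3) (GaloisField 3 2)) (1 : GaloisField 3 2)) ∧
    ∀ α β : K,
      ((α + β : K) : Module.End (ZMod 3) (GaloisField 3 2)) (1 : GaloisField 3 2)
        = (α : Module.End (ZMod 3) (GaloisField 3 2)) (1 : GaloisField 3 2)
          + (β : Module.End (ZMod 3) (GaloisField 3 2)) (1 : GaloisField 3 2) := by
  set E := GaloisField 3 2
  set f : K → E := fun α : K => (α : Module.End (ZMod 3) E) (1 : E)
  have hadd : ∀ α β : K, f (α + β) = f α + f β := by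
    intro α β
    show ((α : Module.End (ZMod 3) E) + β) 1 = _
    simp [f]
  -- injectivity
  have hzero : ∀ α : K, f α = 0 → α = 0 := by
    intro α hα
    by_contra hne
    obtain ⟨β, hβ⟩ := hK.mul_inv_cancel hne
    have hcomm := hK.mul_comm α β
    rw [hcomm] at hβ
    have : f (β * α) = f 1 := by rw [hβ]
    have h1 : (β : Module.End (ZMod 3) E) ((α : Module.End (ZMod 3) E) 1) = 1 := by
      simpa [f, Module.End.mul_apply] using this
    rw [show (α : Module.End (ZMod 3) E) 1 = 0 from hα] at h1
    simp at h1
  have hinj : Function.Injective f := by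
    intro a b hab
    have : f (a - b) = 0 := by
      have := hadd (a - b) b
      simp only [sub_add_cancel] at this
      rw [hab] at this
      exact (right_eq_add.mp this)
    have := hzero _ this
    exact sub_eq_zero.mp this
  haveI : Finite E := inferInstanceAs (Finite (GaloisField 3 2))
  have hcardE : Nat.card E = 9 := by
    have h := GaloisField.card 3 2 (by norm_num)
    simpa using h
  have hbij : Function.Bijective f := by
    rw [Nat.bijective_iff_injective_and_card]
    exact ⟨hinj, by rw [hcard, hcardE]⟩
  exact ⟨hbij, hadd⟩
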